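/- If f has mean zero and is nonzero, then g = f + c·v (v ∈ ∂B(f)) and h = argmin_u { T(u) + E(f)‖u − g‖₂²/(2c) } both have mean zero and are nonzero. -/

import Mathlib

open Finset Filter Topology

noncomputable def meanV {n : ℕ} (f : Fin n → ℝ) : ℝ := (∑ i, f i) / n
noncomputable def TVfun {n : ℕ} (w : Fin n → Fin n → ℝ) (f : Fin n → ℝ) : ℝ :=
  (1/2) * ∑ i, ∑ j, w i j * |f i - f j|
noncomputable def Bfun {n : ℕ} (f : Fin n → ℝ) : ℝ := ∑ i, |f i - meanV f|
noncomputable def Efun {n : ℕ} (w : Fin n → Fin n → ℝ) (f : Fin n → ℝ) : ℝ :=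
  TVfun w f / Bfun f
noncomputable def norm2 {n : ℕ} (f : Fin n → ℝ) : ℝ := Real.sqrt (∑ i, (f i)^2)
noncomputable def dotV {n : ℕ} (u v : Fin n → ℝ) : ℝ := ∑ i, u i * v i
def IsSubgradient {n : ℕ} (F : (Fin n → ℝ) → ℝ) (f v : Fin n → ℝ) : Prop :=
  ∀ y, F f + dotV v (y - f) ≤ F y
def GraphConnected {n : ℕ} (w : Fin n → Fin n → ℝ) : Prop :=
  ∀ i j : Fin n, Relation.ReflTransGen (fun a b => 0 < w a b) i j
def Nonconstant {n : ℕ} (f : Fin n → ℝ) : Prop := ∃ i j, f i ≠ f j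
def signSet (t : ℝ) : Set ℝ := if t > 0 then {1} else if t < 0 then {-1} else Set.Icc (-1) 1
noncomputable def P0 {n : ℕ} (f : Fin n → ℝ) : Fin n → ℝ := fun i => f i - meanV f

lemma exists_diff_edge {n : ℕ} (w : Fin n → Fin n → ℝ) (f : Fin n → ℝ)
    {a b : Fin n} (hR : Relation.ReflTransGen (fun x y => 0 < w x y) a b) :
    f a ≠ f b → ∃ i j, 0 < w i j ∧ f i ≠ f j := by
  induction hR with
  | refl => intro hcon; exact absurd rfl hcon
  | @tail b' cc hR' hstep ih =>
    intro hac
    by_cases hbc : f b' = f cc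
    · exact ih (by rw [hbc]; exact hac)
    · exact ⟨b', cc, hstep, hbc⟩

lemma TV_pos {n : ℕ} (w : Fin n → Fin n → ℝ) (hnn : ∀ i j, 0 ≤ w i j)
    (f : Fin n → ℝ) {i0 j0 : Fin n} (hw : 0 < w i0 j0) (hf : f i0 ≠ f j0) :
    0 < TVfun w f := by
  unfold TVfun
  have hterm : 0 < w i0 j0 * |f i0 - f j0| :=
    mul_pos hw (abs_pos.2 (sub_ne_zero.2 hf))
  have h1 : w i0 j0 * |f i0 - f j0| ≤ ∑ j, w i0 j * |f i0 - f j| :=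
    Finset.single_le_sum (f := fun j => w i0 j * |f i0 - f j|)
      (fun j _ => mul_nonneg (hnn _ _) (abs_nonneg _)) (mem_univ _)
  have h2 : ∑ j, w i0 j * |f i0 - f j| ≤ ∑ i, ∑ j, w i j * |f i - f j| :=
    Finset.single_le_sum (f := fun i => ∑ j, w i j * |f i - f j|)
      (fun i _ => Finset.sum_nonneg fun j _ => mul_nonneg (hnn _ _) (abs_nonneg _))
      (mem_univ _)
  linarith

lemma TV_shift {n : ℕ} (w : Fin n → Fin n → ℝ) (h : Fin n → ℝ) (t : ℝ) :
    TVfun w (fun i => h i - t) = TVfun w h := by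
  unfold TVfun
  congr 1
  refine Finset.sum_congr rfl fun i _ => Finset.sum_congr rfl fun j _ => ?_
  congr 1
  ring

lemma norm2_sq {n : ℕ} (u : Fin n → ℝ) : norm2 u ^ 2 = ∑ i, (u i)^2 :=
  Real.sq_sqrt (Finset.sum_nonneg fun i _ => sq_nonneg _)


set_option maxHeartbeats 1000000 in
theorem stmt10 {n : ℕ} (w : Fin n → Fin n → ℝ)
    (hsym : ∀ i j, w i j = w j i) (hnn : ∀ i j, 0 ≤ w i j)
    (hconn : GraphConnected w) (c : ℝ) (hc : 0 < c)
    (f v g h : Fin n → ℝ) (hmean : meanV f = 0) (hnz : f ≠ 0)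
    (hv : IsSubgradient Bfun f v) (hg : g = f + c • v)
    (hh : ∀ u : Fin n → ℝ,
      TVfun w h + Efun w f * norm2 (h - g)^2 / (2*c)
        ≤ TVfun w u + Efun w f * norm2 (u - g)^2 / (2*c)) :
    meanV g = 0 ∧ g ≠ 0 ∧ meanV h = 0 ∧ h ≠ 0 := by
  -- basic facts
  obtain ⟨i0, hi0⟩ : ∃ i, f i ≠ 0 := by
    by_contra hcon; push_neg at hcon
    exact hnz (funext fun i => hcon i)
  have hn0 : (n : ℝ) ≠ 0 := by
    intro h0
    have : n = 0 := by exact_mod_cast h0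
    subst this; exact i0.elim0
  have hnpos : (0:ℝ) < n := lt_of_le_of_ne (Nat.cast_nonneg n) (Ne.symm hn0)
  have hsf : ∑ i, f i = 0 := by
    have := hmean
    unfold meanV at this
    rcases div_eq_zero_iff.1 this with h1 | h1
    · exact h1
    · exact absurd h1 hn0
  -- sum of v is zero
  have hBshift : ∀ t : ℝ, Bfun (fun i => f i + t) = Bfun f := by
    intro t
    unfold Bfun meanV
    rw [Finset.sum_add_distrib, Finset.sum_const, card_univ, Fintype.card_fin]
    have he : ((∑ i, f i) + n • t) / n = (∑ i, f i)/n + t := by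
      rw [nsmul_eq_mul]; field_simp
    rw [he]
    refine Finset.sum_congr rfl fun i _ => ?_
    congr 1; ring
  have hsv : ∑ i, v i = 0 := by
    have h1 := hv (fun i => f i + 1)
    have h2 := hv (fun i => f i + (-1))
    rw [hBshift 1] at h1
    rw [hBshift (-1)] at h2
    unfold dotV at h1 h2
    simp only [Pi.sub_apply, add_sub_cancel_left, mul_one, mul_neg_one] at h1 h2
    rw [Finset.sum_neg_distrib] at h2
    linarith
  -- dot product lower bound
  have hdot : Bfun f ≤ dotV v f := by
    have h0 := hv 0
    have hB0 : Bfun (0 : Fin n → ℝ) = 0 := by simp [Bfun, meanV]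
    have he : dotV v ((0 : Fin n → ℝ) - f) = - dotV v f := by
      unfold dotV
      rw [← Finset.sum_neg_distrib]
      refine Finset.sum_congr rfl fun i _ => ?_
      simp only [Pi.sub_apply, Pi.zero_apply]; ring
    rw [hB0, he] at h0
    linarith
  -- Bfun f positive
  have hBf : Bfun f = ∑ i, |f i| := by
    unfold Bfun; rw [hmean]; simp
  have hBpos : 0 < Bfun f := by
    rw [hBf]
    refine Finset.sum_pos' (fun i _ => abs_nonneg _) ⟨i0, mem_univ _, abs_pos.2 hi0⟩
  -- f is nonconstant
  have hnc : ∃ b, f b ≠ f i0 := by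
    by_contra hcon; push_neg at hcon
    have : ∑ i, f i = n * f i0 := by
      rw [Finset.sum_congr rfl fun i _ => hcon i]
      simp [mul_comm]
    rw [hsf] at this
    have : f i0 = 0 := by
      field_simp at this
      rcases mul_eq_zero.1 (by linarith : (n:ℝ) * f i0 = 0) with h1 | h1
      · simp [h1] at hn0
      · exact h1
    exact hi0 this
  obtain ⟨b0, hb0⟩ := hnc
  have hTpos : 0 < TVfun w f := by
    obtain ⟨i1, j1, hw1, hf1⟩ := exists_diff_edge w f (hconn b0 i0) hb0
    exact TV_pos w hnn f hw1 hf1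
  have hEpos : 0 < Efun w f := div_pos hTpos hBpos
  set E := Efun w f with hE
  have hEB : E * Bfun f = TVfun w f := by
    rw [hE]; unfold Efun; field_simp
  -- mean of g
  have hsg : ∑ i, g i = 0 := by
    rw [hg]
    simp only [Pi.add_apply, Pi.smul_apply, smul_eq_mul]
    rw [Finset.sum_add_distrib, hsf, ← Finset.mul_sum, hsv]
    ring
  have hmg : meanV g = 0 := by unfold meanV; rw [hsg]; simp
  -- g nonzero
  have hgnz : g ≠ 0 := by
    intro hg0
    rw [hg0] at hg
    have hvi : ∀ i, v i = -(f i) / c := by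
      intro i
      have := congrFun hg i
      simp only [Pi.zero_apply, Pi.add_apply, Pi.smul_apply, smul_eq_mul] at this
      field_simp
      linarith
    have hdv : dotV v f = -((∑ i, (f i)^2) / c) := by
      unfold dotV
      have hpt : ∀ i : Fin n, v i * f i = -((f i)^2 / c) := fun i => by
        rw [hvi i]; ring
      rw [Finset.sum_congr rfl fun i _ => hpt i, Finset.sum_neg_distrib, Finset.sum_div]
    have hS2 : 0 < ∑ i, (f i)^2 :=
      Finset.sum_pos' (fun i _ => sq_nonneg _) ⟨i0, mem_univ _, by positivity⟩
    rw [hdv] at hdot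
    have hposq : 0 < (∑ i, (f i)^2) / c := div_pos hS2 hc
    linarith
  -- mean of h
  have h2c : (0:ℝ) < 2*c := by linarith
  set m := meanV h with hm
  have hsh : ∑ i, h i = n * m := by
    rw [hm]; unfold meanV; field_simp
  have hTu : TVfun w (fun i => h i - m) = TVfun w h := TV_shift w h m
  have hXu : norm2 ((fun i => h i - m) - g)^2 = norm2 (h - g)^2 - n * m^2 := by
    rw [norm2_sq, norm2_sq]
    have hpt : ∀ i : Fin n, (((fun i => h i - m) - g) i)^2
        = ((h - g) i)^2 - 2*m*(h i - g i) + m^2 := by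
      intro i; simp only [Pi.sub_apply]; ring
    rw [Finset.sum_congr rfl fun i _ => hpt i]
    rw [Finset.sum_add_distrib, Finset.sum_sub_distrib, ← Finset.mul_sum,
      Finset.sum_sub_distrib, hsh, hsg, Finset.sum_const, card_univ, Fintype.card_fin,
      nsmul_eq_mul]
    ring
  have hmh : meanV h = 0 := by
    have key := hh (fun i => h i - m)
    rw [hTu, hXu] at key
    have key2 : (E * norm2 (h - g)^2 - E * (norm2 (h - g)^2 - n * m^2)) / (2*c) ≤ 0 := by
      rw [← div_sub_div_same]; linarith
    rw [div_le_iff₀ h2c] at key2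
    have hm2 : m^2 ≤ 0 := by nlinarith [mul_pos hEpos hnpos]
    have : m = 0 := by nlinarith [sq_nonneg m]
    rw [← hm]; exact this
  refine ⟨hmg, hgnz, hmh, ?_⟩
  -- h nonzero
  intro hh0
  have key := hh f
  rw [hh0] at key
  have hT0 : TVfun w (0 : Fin n → ℝ) = 0 := by simp [TVfun]
  have hX0 : norm2 ((0:Fin n → ℝ) - g)^2
      = (∑ i, (f i)^2) + 2*c*(dotV v f) + c^2 * (∑ i, (v i)^2) := by
    rw [norm2_sq]
    have hpt : ∀ i : Fin n, (((0:Fin n → ℝ) - g) i)^2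
        = (f i)^2 + 2*c*(v i * f i) + c^2 * (v i)^2 := by
      intro i
      have := congrFun hg i
      simp only [Pi.add_apply, Pi.smul_apply, smul_eq_mul] at this
      simp only [Pi.sub_apply, Pi.zero_apply, this]
      ring
    rw [Finset.sum_congr rfl fun i _ => hpt i]
    unfold dotV
    rw [Finset.sum_add_distrib, Finset.sum_add_distrib, ← Finset.mul_sum, ← Finset.mul_sum]
  have hXf : norm2 (f - g)^2 = c^2 * (∑ i, (v i)^2) := by
    rw [norm2_sq]
    have hpt : ∀ i : Fin n, ((f - g) i)^2 = c^2 * (v i)^2 := by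
      intro i
      have := congrFun hg i
      simp only [Pi.add_apply, Pi.smul_apply, smul_eq_mul] at this
      simp only [Pi.sub_apply, this]
      ring
    rw [Finset.sum_congr rfl fun i _ => hpt i, ← Finset.mul_sum]
  rw [hT0, hX0, hXf] at key
  have hS2 : 0 < ∑ i, (f i)^2 :=
    Finset.sum_pos' (fun i _ => sq_nonneg _) ⟨i0, mem_univ _, by positivity⟩
  have key2 : (E * ((∑ i, (f i)^2) + 2*c*(dotV v f) + c^2 * (∑ i, (v i)^2))
      - E * (c^2 * (∑ i, (v i)^2))) / (2*c) ≤ TVfun w f := by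
    rw [← div_sub_div_same]; linarith
  rw [div_le_iff₀ h2c] at key2
  have hEBD : E * Bfun f ≤ E * dotV v f := mul_le_mul_of_nonneg_left hdot hEpos.le
  have hES : 0 < E * ∑ i, (f i)^2 := mul_pos hEpos hS2
  nlinarith [key2, hEBD, hES, mul_le_mul_of_nonneg_left hEBD h2c.le]
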